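/- For a compact self-adjoint operator T on a Hilbert space and λ > 0, define n(λ, T) as the number of eigenvalues of T greater than λ (with multiplicity). Then the Weyl inequality holds: for compact self-adjoint A₁, A₂ and λ₁, λ₂ > 0, n(λ₁ + λ₂, A₁ + A₂) ≤ n(λ₁, A₁) + n(λ₂, A₂). -/

import Mathlib

open scoped InnerProductSpace

/-- n(λ, T) = sup{dim F : F ⊆ H a subspace with ⟨Tu, u⟩ > λ for all unit vectors u ∈ F}. -/
noncomputable def nEig {H : Type*} [NormedAddCommGroup H] [InnerProductSpace ℂ H]
    (lam : ℝ) (T : H →L[ℂ] H) : Cardinal :=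
  ⨆ F : {F : Submodule ℂ H // ∀ u ∈ F, ‖u‖ = 1 → lam < (⟪T u, u⟫_ℂ).re},
    Module.rank ℂ F.1

section WeylAux

open Filter Topology

set_option linter.unusedSectionVars false
set_option linter.unusedVariables false

variable {H : Type*} [NormedAddCommGroup H] [InnerProductSpace ℂ H]

/-- There is no infinite orthonormal sequence on which the Rayleigh quotient of a
compact operator stays bounded away from zero. -/
lemma weyl_no_orthonormal_high {A : H →L[ℂ] H} (hAc : IsCompactOperator A) {c : ℝ} (hc : 0 < c)
    {e : ℕ → H} (he : Orthonormal ℂ e) (h : ∀ n, c ≤ |(⟪A (e n), e n⟫_ℂ).re|) : False := by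
  have hAc' : IsCompactOperator (⇑(A : H →ₗ[ℂ] H)) := hAc
  have hb : IsCompact (closure ((A : H →ₗ[ℂ] H) '' Metric.closedBall 0 1)) :=
    hAc'.isCompact_closure_image_of_bounded Metric.isBounded_closedBall
  have hmem : ∀ n, A (e n) ∈ closure ((A : H →ₗ[ℂ] H) '' Metric.closedBall 0 1) := fun n =>
    subset_closure ⟨e n, by simp [he.1 n], rfl⟩
  obtain ⟨v, -, φ, hφmono, hφtend⟩ := hb.tendsto_subseq hmem
  have h1 : Tendsto (fun k => ‖A (e (φ k)) - v‖) atTop (𝓝 0) :=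
    tendsto_iff_norm_sub_tendsto_zero.mp hφtend
  have hsum : Summable fun n => ‖⟪e n, v⟫_ℂ‖ ^ 2 := he.inner_products_summable v
  have h2 : Tendsto (fun n => ‖⟪e n, v⟫_ℂ‖) atTop (𝓝 0) := by
    have h0 : Tendsto (fun n => ‖⟪e n, v⟫_ℂ‖ ^ 2) atTop (𝓝 0) := hsum.tendsto_atTop_zero
    have h0' := (Real.continuous_sqrt.tendsto 0).comp h0
    simpa [Function.comp_def, Real.sqrt_sq, norm_nonneg] using h0'
  have h2' : Tendsto (fun k => ‖⟪v, e (φ k)⟫_ℂ‖) atTop (𝓝 0) := by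
    have := h2.comp hφmono.tendsto_atTop
    simpa [Function.comp_def, norm_inner_symm] using this
  have hb2 : ∀ k, c ≤ ‖A (e (φ k)) - v‖ + ‖⟪v, e (φ k)⟫_ℂ‖ := by
    intro k
    refine le_trans (h (φ k)) ?_
    have hsplit : ⟪A (e (φ k)), e (φ k)⟫_ℂ = ⟪A (e (φ k)) - v, e (φ k)⟫_ℂ + ⟪v, e (φ k)⟫_ℂ := by
      rw [← inner_add_left, sub_add_cancel]
    calc |(⟪A (e (φ k)), e (φ k)⟫_ℂ).re| ≤ ‖⟪A (e (φ k)), e (φ k)⟫_ℂ‖ := Complex.abs_re_le_norm _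
      _ = ‖⟪A (e (φ k)) - v, e (φ k)⟫_ℂ + ⟪v, e (φ k)⟫_ℂ‖ := by rw [← hsplit]
      _ ≤ ‖⟪A (e (φ k)) - v, e (φ k)⟫_ℂ‖ + ‖⟪v, e (φ k)⟫_ℂ‖ := norm_add_le _ _
      _ ≤ ‖A (e (φ k)) - v‖ * ‖e (φ k)‖ + ‖⟪v, e (φ k)⟫_ℂ‖ := by
          gcongr; exact norm_inner_le_norm _ _
      _ = ‖A (e (φ k)) - v‖ + ‖⟪v, e (φ k)⟫_ℂ‖ := by rw [he.1 (φ k), mul_one]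
  have hlim : Tendsto (fun k => ‖A (e (φ k)) - v‖ + ‖⟪v, e (φ k)⟫_ℂ‖) atTop (𝓝 0) := by
    simpa using h1.add h2'
  have : c ≤ 0 := ge_of_tendsto' hlim hb2
  linarith

/-- Any subspace on which the Rayleigh quotient of a compact operator exceeds `l > 0`
is finite dimensional. -/
lemma weyl_adm_finite {A : H →L[ℂ] H} (hAc : IsCompactOperator A) {l : ℝ} (hl : 0 < l)
    {F : Submodule ℂ H} (hF : ∀ u ∈ F, ‖u‖ = 1 → l < (⟪A u, u⟫_ℂ).re) :
    FiniteDimensional ℂ F := by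
  by_contra hfin
  have hinf : Infinite (Module.Basis.ofVectorSpaceIndex ℂ F) := by
    by_contra hI
    have : Finite (Module.Basis.ofVectorSpaceIndex ℂ F) := not_infinite_iff_finite.mp hI
    exact hfin (Module.Finite.of_basis (Module.Basis.ofVectorSpace ℂ F))
  obtain ⟨f, hf⟩ : ∃ f : ℕ → F, LinearIndependent ℂ f := by
    let emb := Infinite.natEmbedding (Module.Basis.ofVectorSpaceIndex ℂ F)
    exact ⟨fun n => Module.Basis.ofVectorSpace ℂ F (emb n),
      (Module.Basis.ofVectorSpace ℂ F).linearIndependent.comp emb emb.injective⟩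
  have hg : LinearIndependent ℂ (fun n => ((f n : F) : H)) := hf.map' F.subtype F.ker_subtype
  set g : ℕ → H := fun n => ((f n : F) : H) with hgdef
  have hgF : ∀ n, g n ∈ F := fun n => (f n).2
  set e := InnerProductSpace.gramSchmidtNormed ℂ g with hedef
  have he : Orthonormal ℂ e := InnerProductSpace.gramSchmidtNormed_orthonormal hg
  have heF : ∀ n, e n ∈ F := by
    intro n
    have h1 : InnerProductSpace.gramSchmidt ℂ g n ∈ Submodule.span ℂ (g '' Set.Iic n) :=
      InnerProductSpace.gramSchmidt_mem_span ℂ g le_rfl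
    have h2 : Submodule.span ℂ (g '' Set.Iic n) ≤ F :=
      Submodule.span_le.mpr (by rintro _ ⟨m, -, rfl⟩; exact hgF m)
    have : e n = (‖InnerProductSpace.gramSchmidt ℂ g n‖ : ℂ)⁻¹ • InnerProductSpace.gramSchmidt ℂ g n := by
      simp [hedef, InnerProductSpace.gramSchmidtNormed]
    rw [this]
    exact F.smul_mem _ (h2 h1)
  exact weyl_no_orthonormal_high hAc hl he fun n =>
    le_trans (hF (e n) (heF n) (he.1 n)).le (le_abs_self _)

variable [CompleteSpace H]

lemma weyl_eig_orth {A : H →L[ℂ] H} (hA : IsSelfAdjoint A) {μ ν : ℝ} {x y : H}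
    (hx : A x = (μ : ℂ) • x) (hy : A y = (ν : ℂ) • y) (hμν : μ ≠ ν) : ⟪x, y⟫_ℂ = 0 := by
  have hs := hA.isSymmetric x y
  simp only [ContinuousLinearMap.coe_coe] at hs
  rw [hx, hy, inner_smul_left, inner_smul_right, Complex.conj_ofReal] at hs
  have : ((μ : ℂ) - ν) * ⟪x, y⟫_ℂ = 0 := by ring_nf; linear_combination hs
  rcases mul_eq_zero.mp this with h | h
  · exact absurd (by exact_mod_cast sub_eq_zero.mp h) hμν
  · exact h

/-- The span of all eigenspaces of `A` with eigenvalue `> l`. -/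
noncomputable def weylV (A : H →L[ℂ] H) (l : ℝ) : Submodule ℂ H :=
  ⨆ μ : {μ : ℝ // l < μ}, Module.End.eigenspace (A : H →ₗ[ℂ] H) ((μ : ℝ) : ℂ)

lemma weylV_invariant {A : H →L[ℂ] H} {l : ℝ} {x : H} (hx : x ∈ weylV A l) :
    A x ∈ weylV A l := by
  have : weylV A l ≤ (weylV A l).comap (A : H →ₗ[ℂ] H) := by
    refine iSup_le fun μ => fun y hy => ?_
    rw [Submodule.mem_comap]
    have hy' : (A : H →ₗ[ℂ] H) y = (((μ : ℝ) : ℂ)) • y := Module.End.mem_eigenspace_iff.mp hy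
    show (A : H →ₗ[ℂ] H) y ∈ weylV A l
    rw [hy']
    exact Submodule.smul_mem _ _ (Submodule.mem_iSup_of_mem μ hy)
  exact this hx

lemma weylV_orth_invariant {A : H →L[ℂ] H} (hA : IsSelfAdjoint A) {l : ℝ} {x : H}
    (hx : x ∈ (weylV A l)ᗮ) : A x ∈ (weylV A l)ᗮ := by
  rw [Submodule.mem_orthogonal] at hx ⊢
  intro u hu
  have hs := hA.isSymmetric u x
  simp only [ContinuousLinearMap.coe_coe] at hs
  rw [← hs]
  exact hx (A u) (weylV_invariant hu)

/-- The Rayleigh quotient on `weylV A l` is `> l`. -/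
lemma weylV_rayleigh {A : H →L[ℂ] H} (hA : IsSelfAdjoint A) {l : ℝ} (hl : 0 < l) {x : H}
    (hx : x ∈ weylV A l) (hx0 : x ≠ 0) : l * ‖x‖ ^ 2 < (⟪A x, x⟫_ℂ).re := by
  classical
  rw [weylV, Submodule.mem_iSup_iff_exists_dfinsupp'] at hx
  obtain ⟨f, rfl⟩ := hx
  rw [DFinsupp.sum]
  set s := f.support with hs
  set u : {μ : ℝ // l < μ} → H := fun i => ((f i : Module.End.eigenspace
    (A : H →ₗ[ℂ] H) ((i : ℝ) : ℂ)) : H) with hu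
  have hAu : ∀ i, A (u i) = (((i : ℝ)) : ℂ) • u i := fun i =>
    Module.End.mem_eigenspace_iff.mp (f i).2
  have hinner : ∀ i j, i ≠ j → ⟪u i, u j⟫_ℂ = 0 := fun i j hij =>
    weyl_eig_orth hA (hAu i) (hAu j) (fun h => hij (Subtype.ext h))
  have hAx : ∀ (B : H →L[ℂ] H), (∀ i, B (u i) = (((i : ℝ)) : ℂ) • u i) →
      ⟪B (∑ i ∈ s, u i), ∑ j ∈ s, u j⟫_ℂ = ∑ i ∈ s, (((i : ℝ)) : ℂ) * (‖u i‖ : ℂ) ^ 2 := by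
    intro B hB
    rw [map_sum, sum_inner]
    refine Finset.sum_congr rfl fun i hi => ?_
    rw [inner_sum, Finset.sum_eq_single_of_mem i hi]
    · rw [hB i, inner_smul_left, Complex.conj_ofReal, inner_self_eq_norm_sq_to_K]
      norm_num
    · intro j hj hji
      rw [hB i, inner_smul_left, hinner i j (fun h => hji (h ▸ rfl)), mul_zero]
  have h1 : ⟪A (∑ i ∈ s, u i), ∑ j ∈ s, u j⟫_ℂ = ∑ i ∈ s, (((i : ℝ)) : ℂ) * (‖u i‖ : ℂ) ^ 2 :=
    hAx A hAu
  have h2 : ⟪(∑ i ∈ s, u i), ∑ j ∈ s, u j⟫_ℂ = ∑ i ∈ s, (‖u i‖ : ℂ) ^ 2 := by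
    rw [sum_inner]
    refine Finset.sum_congr rfl fun i hi => ?_
    rw [inner_sum, Finset.sum_eq_single_of_mem i hi]
    · rw [inner_self_eq_norm_sq_to_K]
      norm_num
    · intro j hj hji
      exact hinner i j (fun h => hji (h ▸ rfl))
  have hre1 : (⟪A (∑ i ∈ s, u i), ∑ j ∈ s, u j⟫_ℂ).re = ∑ i ∈ s, (i : ℝ) * ‖u i‖ ^ 2 := by
    have hcast : ∑ i ∈ s, (((i : ℝ)) : ℂ) * (‖u i‖ : ℂ) ^ 2
        = ((∑ i ∈ s, (i : ℝ) * ‖u i‖ ^ 2 : ℝ) : ℂ) := by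
      push_cast; ring
    rw [h1, hcast, Complex.ofReal_re]
  have hnx : ‖∑ i ∈ s, u i‖ ^ 2 = ∑ i ∈ s, ‖u i‖ ^ 2 := by
    have h2' := h2
    rw [inner_self_eq_norm_sq_to_K] at h2'
    have h2'' : ((‖∑ i ∈ s, u i‖ ^ 2 : ℝ) : ℂ) = ((∑ i ∈ s, ‖u i‖ ^ 2 : ℝ) : ℂ) := by
      push_cast
      exact h2'
    exact Complex.ofReal_inj.mp h2''
  have hsne : s.Nonempty := by
    rw [Finset.nonempty_iff_ne_empty]
    intro hemp
    apply hx0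
    rw [DFinsupp.sum, ← hs, hemp, Finset.sum_empty]
  have hkey : l * (∑ i ∈ s, ‖u i‖ ^ 2) < ∑ i ∈ s, (i : ℝ) * ‖u i‖ ^ 2 := by
    rw [Finset.mul_sum]
    refine Finset.sum_lt_sum_of_nonempty hsne fun i hi => ?_
    have hui : u i ≠ 0 := by
      have hfi : f i ≠ 0 := DFinsupp.mem_support_iff.mp (hs ▸ hi)
      simpa [hu, Submodule.coe_eq_zero] using hfi
    exact mul_lt_mul_of_pos_right i.2 (pow_pos (norm_pos_iff.mpr hui) 2)
  rw [hre1, hnx]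
  exact hkey

lemma weyl_normalize {A : H →L[ℂ] H} {l : ℝ} {x : H} (P : Submodule ℂ H) (hxP : x ∈ P)
    (hx0 : x ≠ 0) (h : l * ‖x‖ ^ 2 < (⟪A x, x⟫_ℂ).re) :
    ∃ y ∈ P, ‖y‖ = 1 ∧ l < (⟪A y, y⟫_ℂ).re := by
  have hn : (0 : ℝ) < ‖x‖ := norm_pos_iff.mpr hx0
  have hn2 : (0 : ℝ) < ‖x‖ ^ 2 := by positivity
  refine ⟨((‖x‖⁻¹ : ℝ) : ℂ) • x, P.smul_mem _ hxP, ?_, ?_⟩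
  · rw [norm_smul, Complex.norm_real, norm_inv, norm_norm, inv_mul_cancel₀ hn.ne']
  · have hcomp : (⟪A (((‖x‖⁻¹ : ℝ) : ℂ) • x), ((‖x‖⁻¹ : ℝ) : ℂ) • x⟫_ℂ).re
        = (‖x‖ ^ 2)⁻¹ * (⟪A x, x⟫_ℂ).re := by
      rw [map_smul, inner_smul_left, inner_smul_right, Complex.conj_ofReal,
        ← mul_assoc, ← Complex.ofReal_mul, Complex.re_ofReal_mul]
      congr 1
      rw [pow_two, mul_inv]
    rw [hcomp, inv_mul_eq_div, lt_div_iff₀ hn2]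
    linarith

/-- Eigenvector extraction with conditional next witness. -/
lemma weyl_step {A : H →L[ℂ] H} (hAc : IsCompactOperator A) (hA : IsSelfAdjoint A)
    {l : ℝ} (hl : 0 < l) {K : Submodule ℂ H} (hKc : IsClosed (K : Set H))
    (hKi : ∀ x ∈ K, A x ∈ K) {u : H} (hu : u ∈ K) (hu1 : ‖u‖ = 1)
    (huR : l < (⟪A u, u⟫_ℂ).re) :
    ∃ w ∈ K, ‖w‖ = 1 ∧ ∃ μ : ℝ, l < |μ| ∧ A w = (μ : ℂ) • w ∧
      (μ < 0 → ∃ y ∈ K ⊓ (ℂ ∙ w)ᗮ, ‖y‖ = 1 ∧ l < (⟪A y, y⟫_ℂ).re) := by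
  classical
  set S := (fun x => |(⟪A x, x⟫_ℂ).re|) '' {x : H | x ∈ K ∧ ‖x‖ = 1} with hSdef
  have hSne : S.Nonempty := ⟨_, ⟨u, ⟨hu, hu1⟩, rfl⟩⟩
  have hSbdd : BddAbove S := by
    refine ⟨‖A‖, ?_⟩
    rintro _ ⟨x, ⟨hxK, hx1⟩, rfl⟩
    calc |(⟪A x, x⟫_ℂ).re| ≤ ‖⟪A x, x⟫_ℂ‖ := Complex.abs_re_le_norm _
      _ ≤ ‖A x‖ * ‖x‖ := norm_inner_le_norm _ _
      _ ≤ (‖A‖ * ‖x‖) * ‖x‖ := by gcongr; exact A.le_opNorm x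
      _ = ‖A‖ := by rw [hx1]; ring
  set C := sSup S with hCdef
  have hlC : l < C := lt_of_lt_of_le (lt_of_lt_of_le huR (le_abs_self _))
    (le_csSup hSbdd ⟨u, ⟨hu, hu1⟩, rfl⟩)
  have hC0 : 0 < C := lt_trans hl hlC
  -- Rayleigh bound on K
  have hray : ∀ x ∈ K, |(⟪A x, x⟫_ℂ).re| ≤ C * ‖x‖ ^ 2 := by
    intro x hxK
    rcases eq_or_ne x 0 with rfl | hx0
    · simp
    · have hn : (0 : ℝ) < ‖x‖ := norm_pos_iff.mpr hx0
      set y := ((‖x‖⁻¹ : ℝ) : ℂ) • x with hy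
      have hy1 : ‖y‖ = 1 := by
        rw [hy, norm_smul, Complex.norm_real, norm_inv, norm_norm, inv_mul_cancel₀ hn.ne']
      have hyK : y ∈ K := K.smul_mem _ hxK
      have hle : |(⟪A y, y⟫_ℂ).re| ≤ C := le_csSup hSbdd ⟨y, ⟨hyK, hy1⟩, rfl⟩
      have hcomp : (⟪A y, y⟫_ℂ).re = (‖x‖ ^ 2)⁻¹ * (⟪A x, x⟫_ℂ).re := by
        rw [hy, map_smul, inner_smul_left, inner_smul_right, Complex.conj_ofReal,
          ← mul_assoc, ← Complex.ofReal_mul, Complex.re_ofReal_mul]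
        congr 1
        rw [pow_two, mul_inv]
      rw [hcomp, abs_mul, abs_inv, abs_of_nonneg (by positivity : (0:ℝ) ≤ ‖x‖ ^ 2)] at hle
      have h2 : (0:ℝ) < ‖x‖ ^ 2 := by positivity
      calc |(⟪A x, x⟫_ℂ).re| = ‖x‖ ^ 2 * ((‖x‖ ^ 2)⁻¹ * |(⟪A x, x⟫_ℂ).re|) := by
            field_simp
        _ ≤ ‖x‖ ^ 2 * C := mul_le_mul_of_nonneg_left hle (by positivity)
        _ = C * ‖x‖ ^ 2 := by ring
  have hsym : ∀ x y : H, (⟪A y, x⟫_ℂ).re = (⟪A x, y⟫_ℂ).re := by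
    intro x y
    have hs := hA.isSymmetric y x
    simp only [ContinuousLinearMap.coe_coe] at hs
    rw [hs, ← inner_conj_symm, Complex.conj_re]
  -- operator-norm bound on K
  have hnorm : ∀ x ∈ K, ‖A x‖ ≤ C * ‖x‖ := by
    intro x hxK
    rcases eq_or_ne (A x) 0 with hAx0 | hAx0
    · rw [hAx0, norm_zero]; positivity
    have hx0 : x ≠ 0 := by rintro rfl; simp at hAx0
    have hn : (0 : ℝ) < ‖x‖ := norm_pos_iff.mpr hx0
    have hnA : (0 : ℝ) < ‖A x‖ := norm_pos_iff.mpr hAx0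
    set y := ((‖x‖ * ‖A x‖⁻¹ : ℝ) : ℂ) • A x with hy
    have hyK : y ∈ K := K.smul_mem _ (hKi x hxK)
    have hyn : ‖y‖ = ‖x‖ := by
      rw [hy, norm_smul, Complex.norm_real, Real.norm_eq_abs, abs_of_nonneg (by positivity)]
      field_simp
    have hpol : 4 * (⟪A x, y⟫_ℂ).re = (⟪A (x+y), x+y⟫_ℂ).re - (⟪A (x-y), x-y⟫_ℂ).re := by
      simp only [map_add, map_sub, inner_add_left, inner_add_right, inner_sub_left,
        inner_sub_right, Complex.add_re, Complex.sub_re]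
      linarith [hsym x y]
    have hb : 4 * (⟪A x, y⟫_ℂ).re ≤ C * (2 * ‖x‖ ^ 2 + 2 * ‖y‖ ^ 2) := by
      rw [hpol]
      have e1 : |(⟪A (x+y), x+y⟫_ℂ).re| ≤ C * ‖x+y‖ ^ 2 := hray _ (K.add_mem hxK hyK)
      have e2 : |(⟪A (x-y), x-y⟫_ℂ).re| ≤ C * ‖x-y‖ ^ 2 := hray _ (K.sub_mem hxK hyK)
      have hpar := parallelogram_law_with_norm_mul ℂ x y
      calc (⟪A (x+y), x+y⟫_ℂ).re - (⟪A (x-y), x-y⟫_ℂ).re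
          ≤ |(⟪A (x+y), x+y⟫_ℂ).re| + |(⟪A (x-y), x-y⟫_ℂ).re| := by
            have := le_abs_self (⟪A (x+y), x+y⟫_ℂ).re
            have := neg_abs_le (⟪A (x-y), x-y⟫_ℂ).re
            linarith
        _ ≤ C * ‖x+y‖ ^ 2 + C * ‖x-y‖ ^ 2 := add_le_add e1 e2
        _ = C * (‖x+y‖ * ‖x+y‖ + ‖x-y‖ * ‖x-y‖) := by ring
        _ = C * (2 * (‖x‖ * ‖x‖ + ‖y‖ * ‖y‖)) := by rw [hpar]
        _ = C * (2 * ‖x‖ ^ 2 + 2 * ‖y‖ ^ 2) := by ring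
    have hiy : (⟪A x, y⟫_ℂ).re = ‖x‖ * ‖A x‖ := by
      have hAA : (⟪A x, A x⟫_ℂ).re = ‖A x‖ ^ 2 := by
        have h := @inner_self_eq_norm_sq ℂ _ _ _ _ (A x)
        simpa using h
      rw [hy, inner_smul_right, Complex.re_ofReal_mul, hAA]
      field_simp
    rw [hiy] at hb
    rw [hyn] at hb
    nlinarith [hn, hC0]
  -- maximizing sequence
  have hseq : ∀ n : ℕ, ∃ x, (x ∈ K ∧ ‖x‖ = 1) ∧ C - 1/(n+1) < |(⟪A x, x⟫_ℂ).re| := by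
    intro n
    have hlt : C - 1/(n+1) < C := by
      have : (0:ℝ) < 1/(n+1) := by positivity
      linarith
    obtain ⟨t, htS, hts⟩ := exists_lt_of_lt_csSup hSne hlt
    obtain ⟨x, hx, rfl⟩ := htS
    exact ⟨x, hx, hts⟩
  choose x hxm hxv using hseq
  set t : ℕ → ℝ := fun n => (⟪A (x n), x n⟫_ℂ).re with ht
  have htb : ∀ n, t n ∈ Set.Icc (-C) C := by
    intro n
    have := hray (x n) (hxm n).1
    rw [(hxm n).2, one_pow, mul_one] at this
    exact Set.mem_Icc.mpr (abs_le.mp this)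
  obtain ⟨μ, -, φ, hφmono, hφt⟩ := tendsto_subseq_of_bounded
    (Metric.isBounded_Icc (-C) C) htb
  have habs : Tendsto (fun k => |t (φ k)|) atTop (𝓝 |μ|) := by
    exact ((continuous_abs.tendsto μ).comp hφt)
  have hub : ∀ k, |t (φ k)| ≤ C := fun k => abs_le.mpr (htb (φ k))
  have hlb : ∀ k, C - 1/(φ k + 1) ≤ |t (φ k)| := fun k => (hxv (φ k)).le
  have hC1 : Tendsto (fun k : ℕ => C - 1/((φ k : ℝ)+1)) atTop (𝓝 C) := by
    have h0 : Tendsto (fun n : ℕ => 1/((n:ℝ)+1)) atTop (𝓝 0) :=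
      tendsto_one_div_add_atTop_nhds_zero_nat
    have h0' := h0.comp hφmono.tendsto_atTop
    simpa using tendsto_const_nhds.sub h0'
  have hμC : |μ| = C := le_antisymm (le_of_tendsto habs (Eventually.of_forall hub))
    (le_of_tendsto_of_tendsto' hC1 habs hlb)
  have hμ0 : μ ≠ 0 := by
    intro h
    rw [h, abs_zero] at hμC
    linarith
  -- A xφ - μ xφ → 0
  have hAxb : ∀ k, ‖A (x (φ k))‖ ≤ C := by
    intro k
    have := hnorm (x (φ k)) (hxm (φ k)).1
    rwa [(hxm (φ k)).2, mul_one] at this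
  have hsq : ∀ k, ‖A (x (φ k)) - (μ:ℂ) • x (φ k)‖ ^ 2 ≤ C ^ 2 + μ ^ 2 - 2*μ*(t (φ k)) := by
    intro k
    have hns := @norm_sub_sq ℂ _ _ _ _ (A (x (φ k))) ((μ:ℂ) • x (φ k))
    simp only [RCLike.re_to_complex] at hns
    rw [inner_smul_right, Complex.re_ofReal_mul] at hns
    have hnb : ‖(μ:ℂ) • x (φ k)‖ = |μ| := by
      rw [norm_smul, Complex.norm_real, Real.norm_eq_abs, (hxm (φ k)).2, mul_one]
    rw [hnb] at hns
    have hA2 : ‖A (x (φ k))‖ ^ 2 ≤ C ^ 2 := by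
      have := hAxb k
      nlinarith [norm_nonneg (A (x (φ k)))]
    rw [hns]
    have : |μ| ^ 2 = μ ^ 2 := sq_abs μ
    nlinarith [hA2]
  have hgt : Tendsto (fun k => C ^ 2 + μ ^ 2 - 2*μ*(t (φ k))) atTop (𝓝 0) := by
    have h1 : Tendsto (fun k => 2*μ*(t (φ k))) atTop (𝓝 (2*μ*μ)) := by
      exact (hφt.const_mul (2*μ))
    have h2 : Tendsto (fun k : ℕ => (C ^ 2 + μ ^ 2) - 2*μ*(t (φ k))) atTop
        (𝓝 ((C ^ 2 + μ ^ 2) - 2*μ*μ)) := tendsto_const_nhds.sub h1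
    have h3 : (C ^ 2 + μ ^ 2) - 2*μ*μ = 0 := by
      have : μ ^ 2 = C ^ 2 := by rw [← sq_abs, hμC]
      nlinarith
    rw [h3] at h2
    exact h2
  have hdiff : Tendsto (fun k => A (x (φ k)) - (μ:ℂ) • x (φ k)) atTop (𝓝 0) := by
    rw [tendsto_zero_iff_norm_tendsto_zero]
    have hsq0 : Tendsto (fun k => ‖A (x (φ k)) - (μ:ℂ) • x (φ k)‖ ^ 2) atTop (𝓝 0) :=
      squeeze_zero (fun k => sq_nonneg _) hsq hgt
    have h4 := (Real.continuous_sqrt.tendsto 0).comp hsq0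
    simpa [Function.comp_def, Real.sqrt_sq, norm_nonneg] using h4
  -- compactness
  have hAc' : IsCompactOperator (⇑(A : H →ₗ[ℂ] H)) := hAc
  have hcomp : IsCompact (closure ((A : H →ₗ[ℂ] H) '' Metric.closedBall 0 1)) :=
    hAc'.isCompact_closure_image_of_bounded Metric.isBounded_closedBall
  obtain ⟨v, -, ψ, hψmono, hψt⟩ := hcomp.tendsto_subseq
    (x := fun k => A (x (φ k)))
    (fun k => subset_closure ⟨x (φ k), by simp [(hxm (φ k)).2], rfl⟩)
  have h5 : Tendsto (fun k => (μ:ℂ) • x (φ (ψ k))) atTop (𝓝 v) := by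
    have hdiff' := hdiff.comp hψmono.tendsto_atTop
    have h6 := hψt.sub hdiff'
    simpa using h6
  have hμc0 : (μ:ℂ) ≠ 0 := Complex.ofReal_ne_zero.mpr hμ0
  set w := ((μ:ℂ))⁻¹ • v with hw
  have h6 : Tendsto (fun k => x (φ (ψ k))) atTop (𝓝 w) := by
    have h7 := h5.const_smul ((μ:ℂ))⁻¹
    have h8 : (fun k => ((μ:ℂ))⁻¹ • ((μ:ℂ) • x (φ (ψ k)))) = fun k => x (φ (ψ k)) :=
      funext fun k => inv_smul_smul₀ hμc0 _
    rw [← hw] at h7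
    rwa [h8] at h7
  have hwK : w ∈ K := hKc.mem_of_tendsto h6 (Eventually.of_forall fun k => (hxm _).1)
  have hw1 : ‖w‖ = 1 := by
    have h7 : Tendsto (fun k => ‖x (φ (ψ k))‖) atTop (𝓝 ‖w‖) :=
      (continuous_norm.tendsto w).comp h6
    have h8 : (fun k => ‖x (φ (ψ k))‖) = fun _ => (1:ℝ) := funext fun k => (hxm _).2
    rw [h8] at h7
    exact tendsto_nhds_unique h7 tendsto_const_nhds
  have hAw : A w = (μ:ℂ) • w := by
    have h9 : Tendsto (fun k => A (x (φ (ψ k)))) atTop (𝓝 (A w)) :=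
      (A.continuous.tendsto w).comp h6
    have h10 : A w = v := tendsto_nhds_unique h9 hψt
    rw [h10, hw, smul_inv_smul₀ hμc0]
  refine ⟨w, hwK, hw1, μ, by rw [hμC]; exact hlC, hAw, ?_⟩
  -- next witness when μ < 0
  intro hμneg
  set c := ⟪w, u⟫_ℂ with hc
  set u' := u - c • w with hu'
  have hww : ⟪w, w⟫_ℂ = 1 := by
    rw [inner_self_eq_norm_sq_to_K, hw1]
    norm_num
  have hwu' : ⟪w, u'⟫_ℂ = 0 := by
    rw [hu', inner_sub_right, inner_smul_right, hww, mul_one, ← hc, sub_self]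
  have hu'w : ⟪u', w⟫_ℂ = 0 := by
    rw [← inner_conj_symm, hwu', map_zero]
  have hu'K : u' ∈ K := K.sub_mem hu (K.smul_mem _ hwK)
  have hAuw : ⟪A u, w⟫_ℂ = (μ:ℂ) * (starRingEnd ℂ) c := by
    have hs := hA.isSymmetric u w
    simp only [ContinuousLinearMap.coe_coe] at hs
    rw [hs, hAw, inner_smul_right, hc, ← inner_conj_symm]
  have hexp : ⟪A u', u'⟫_ℂ = ⟪A u, u⟫_ℂ - (μ:ℂ) * (c * (starRingEnd ℂ) c) := by
    have hAu' : A u' = A u - (c * (μ:ℂ)) • w := by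
      rw [hu', map_sub, map_smul, hAw, smul_smul]
    rw [hAu', hu']
    simp only [inner_sub_left, inner_sub_right, inner_smul_left, inner_smul_right,
      map_mul, Complex.conj_ofReal]
    rw [hAuw, hww, ← hc]
    ring
  have hrayu' : (⟪A u', u'⟫_ℂ).re = (⟪A u, u⟫_ℂ).re - μ * Complex.normSq c := by
    rw [hexp, Complex.mul_conj, Complex.sub_re, ← Complex.ofReal_mul, Complex.ofReal_re]
  have hnsq : 0 ≤ Complex.normSq c := Complex.normSq_nonneg c
  have hu'0 : u' ≠ 0 := by
    intro h
    rw [h] at hrayu'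
    simp only [map_zero, inner_zero_left, Complex.zero_re] at hrayu'
    nlinarith
  have hu'w : ⟪u', w⟫_ℂ = 0 := by
    rw [← inner_conj_symm, hwu', map_zero]
  have hnu'le : ‖u'‖ ≤ 1 := by
    have huu : (⟪u, u⟫_ℂ) = 1 := by
      rw [inner_self_eq_norm_sq_to_K, hu1]
      norm_num
    have hself : ⟪u', u'⟫_ℂ = ⟪u', u⟫_ℂ := by
      have h1 : ⟪u', u'⟫_ℂ = ⟪u', u⟫_ℂ - c * ⟪u', w⟫_ℂ := by
        nth_rewrite 2 [hu']
        rw [inner_sub_right, inner_smul_right]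
      rw [h1, hu'w, mul_zero, sub_zero]
    have hn2 : ‖u'‖ ^ 2 = (⟪u', u⟫_ℂ).re := by
      have h2 := @inner_self_eq_norm_sq ℂ _ _ _ _ u'
      simp only [RCLike.re_to_complex] at h2
      rw [← h2, hself]
    have h3 : (⟪u', u⟫_ℂ).re ≤ ‖u'‖ := by
      calc (⟪u', u⟫_ℂ).re ≤ |(⟪u', u⟫_ℂ).re| := le_abs_self _
        _ ≤ ‖⟪u', u⟫_ℂ‖ := Complex.abs_re_le_norm _
        _ ≤ ‖u'‖ * ‖u‖ := norm_inner_le_norm _ _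
        _ = ‖u'‖ := by rw [hu1, mul_one]
    nlinarith [norm_nonneg u']
  have hstrict : l * ‖u'‖ ^ 2 < (⟪A u', u'⟫_ℂ).re := by
    have hsq1 : ‖u'‖ ^ 2 ≤ 1 := pow_le_one₀ (norm_nonneg u') hnu'le
    have h4 : l * ‖u'‖ ^ 2 ≤ l := by
      calc l * ‖u'‖ ^ 2 ≤ l * 1 := mul_le_mul_of_nonneg_left hsq1 hl.le
        _ = l := mul_one l
    have h5' : 0 ≤ -μ * Complex.normSq c := mul_nonneg (by linarith) hnsq
    rw [hrayu']
    linarith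
  have hu'mem : u' ∈ K ⊓ (ℂ ∙ w)ᗮ := by
    refine Submodule.mem_inf.mpr ⟨hu'K, ?_⟩
    exact Submodule.mem_orthogonal_singleton_iff_inner_right.mpr hwu'
  exact weyl_normalize (K ⊓ (ℂ ∙ w)ᗮ) hu'mem hu'0 hstrict

/-- On the orthogonal complement of all eigenspaces with eigenvalue `> l`, the Rayleigh
quotient is at most `l`. -/
lemma weyl_orth_bound {A : H →L[ℂ] H} (hAc : IsCompactOperator A) (hA : IsSelfAdjoint A)
    {l : ℝ} (hl : 0 < l) {x : H} (hx : x ∈ (weylV A l)ᗮ) (hx1 : ‖x‖ = 1) :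
    (⟪A x, x⟫_ℂ).re ≤ l := by
  by_contra hR
  push_neg at hR
  set Good : Submodule ℂ H → Prop := fun K =>
    IsClosed (K : Set H) ∧ (∀ y ∈ K, A y ∈ K) ∧ K ≤ (weylV A l)ᗮ ∧
      ∃ u ∈ K, ‖u‖ = 1 ∧ l < (⟪A u, u⟫_ℂ).re with hGood
  have hstep : ∀ K, Good K → ∃ w, (w ∈ K ∧ ‖w‖ = 1 ∧ ∃ μ : ℝ, μ ≤ -l ∧ A w = (μ:ℂ) • w) ∧
      Good (K ⊓ (ℂ ∙ w)ᗮ) := by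
    rintro K ⟨hKc, hKi, hKV, u, huK, hu1, huR⟩
    obtain ⟨w, hwK, hw1, μ, hμl, hAw, hnext⟩ := weyl_step hAc hA hl hKc hKi huK hu1 huR
    have hμneg : μ < -l := by
      rcases lt_abs.mp hμl with h | h
      · exfalso
        have hwV : w ∈ weylV A l := Submodule.mem_iSup_of_mem ⟨μ, h⟩
          (Module.End.mem_eigenspace_iff.mpr (by exact_mod_cast hAw))
        have h0 : ⟪w, w⟫_ℂ = 0 := (Submodule.mem_orthogonal _ w).mp (hKV hwK) w hwV
        rw [inner_self_eq_zero] at h0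
        rw [h0, norm_zero] at hw1
        norm_num at hw1
      · linarith
    obtain ⟨y, hy, hy1, hyR⟩ := hnext (by linarith)
    refine ⟨w, ⟨hwK, hw1, μ, hμneg.le, hAw⟩, ?_, ?_, ?_, y, hy, hy1, hyR⟩
    · rw [Submodule.coe_inf]
      exact hKc.inter (Submodule.isClosed_orthogonal _)
    · rintro z hz
      rw [Submodule.mem_inf] at hz ⊢
      refine ⟨hKi z hz.1, ?_⟩
      rw [Submodule.mem_orthogonal_singleton_iff_inner_right]
      have hzw : ⟪w, z⟫_ℂ = 0 := Submodule.mem_orthogonal_singleton_iff_inner_right.mp hz.2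
      have hs := hA.isSymmetric w z
      simp only [ContinuousLinearMap.coe_coe] at hs
      rw [← hs, hAw, inner_smul_left, hzw, mul_zero]
    · exact le_trans inf_le_left hKV
  have hGood0 : Good ((weylV A l)ᗮ) :=
    ⟨Submodule.isClosed_orthogonal _, fun y hy => weylV_orth_invariant hA hy, le_rfl,
      x, hx, hx1, hR⟩
  choose w hwprop hGnext using hstep
  let next : {K : Submodule ℂ H // Good K} → {K : Submodule ℂ H // Good K} :=
    fun p => ⟨p.1 ⊓ (ℂ ∙ w p.1 p.2)ᗮ, hGnext p.1 p.2⟩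
  let seq : ℕ → {K : Submodule ℂ H // Good K} := fun n => next^[n] ⟨(weylV A l)ᗮ, hGood0⟩
  have hseqsucc : ∀ n, seq (n+1) = next (seq n) := fun n =>
    Function.iterate_succ_apply' next n _
  let e : ℕ → H := fun n => w (seq n).1 (seq n).2
  have hemem : ∀ n, e n ∈ (seq n).1 := fun n => (hwprop (seq n).1 (seq n).2).1
  have he1 : ∀ n, ‖e n‖ = 1 := fun n => (hwprop (seq n).1 (seq n).2).2.1
  have heig : ∀ n, ∃ μ : ℝ, μ ≤ -l ∧ A (e n) = (μ:ℂ) • (e n) := fun n =>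
    (hwprop (seq n).1 (seq n).2).2.2
  have hdec : ∀ n, (seq (n+1)).1 ≤ (seq n).1 := by
    intro n
    rw [hseqsucc n]
    exact inf_le_left
  have hperp : ∀ n, (seq (n+1)).1 ≤ (ℂ ∙ e n)ᗮ := by
    intro n
    rw [hseqsucc n]
    exact inf_le_right
  have hmono : ∀ m n, m ≤ n → (seq n).1 ≤ (seq m).1 := by
    intro m n h
    induction n, h using Nat.le_induction with
    | base => exact le_rfl
    | succ n hmn ih => exact le_trans (hdec n) ih
  have horth : ∀ m n, m < n → ⟪e m, e n⟫_ℂ = 0 := by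
    intro m n h
    have h1 : (seq n).1 ≤ (ℂ ∙ e m)ᗮ := le_trans (hmono (m+1) n h) (hperp m)
    exact Submodule.mem_orthogonal_singleton_iff_inner_right.mp (h1 (hemem n))
  have honb : Orthonormal ℂ e := by
    rw [orthonormal_iff_ite]
    intro i j
    rcases lt_trichotomy i j with hij | hij | hij
    · rw [horth i j hij, if_neg hij.ne]
    · subst hij
      rw [if_pos rfl, inner_self_eq_norm_sq_to_K, he1 i]
      norm_num
    · rw [← inner_conj_symm, horth j i hij, map_zero, if_neg hij.ne']
  refine weyl_no_orthonormal_high hAc hl honb fun n => ?_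
  obtain ⟨μ, hμl, hAe⟩ := heig n
  have : (⟪A (e n), e n⟫_ℂ).re = μ := by
    rw [hAe, inner_smul_left, Complex.conj_ofReal, inner_self_eq_norm_sq_to_K, he1 n]
    norm_num
  rw [this, abs_of_nonpos (by linarith)]
  linarith

end WeylAux

/-- The Weyl inequality: for compact self-adjoint operators A₁, A₂ on a complex Hilbert
space and λ₁, λ₂ > 0, n(λ₁ + λ₂, A₁ + A₂) ≤ n(λ₁, A₁) + n(λ₂, A₂). -/
theorem weyl_inequality {H : Type*} [NormedAddCommGroup H] [InnerProductSpace ℂ H]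
    [CompleteSpace H] (A₁ A₂ : H →L[ℂ] H)
    (hA₁c : IsCompactOperator A₁) (hA₂c : IsCompactOperator A₂)
    (hA₁ : IsSelfAdjoint A₁) (hA₂ : IsSelfAdjoint A₂)
    (l₁ l₂ : ℝ) (hl₁ : 0 < l₁) (hl₂ : 0 < l₂) :
    nEig (l₁ + l₂) (A₁ + A₂) ≤ nEig l₁ A₁ + nEig l₂ A₂ := by
  classical
  have hadm₁ : ∀ u ∈ weylV A₁ l₁, ‖u‖ = 1 → l₁ < (⟪A₁ u, u⟫_ℂ).re := by
    intro u hu h1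
    have hu0 : u ≠ 0 := by
      intro h
      rw [h, norm_zero] at h1
      norm_num at h1
    have := weylV_rayleigh hA₁ hl₁ hu hu0
    rwa [h1, one_pow, mul_one] at this
  have hadm₂ : ∀ u ∈ weylV A₂ l₂, ‖u‖ = 1 → l₂ < (⟪A₂ u, u⟫_ℂ).re := by
    intro u hu h1
    have hu0 : u ≠ 0 := by
      intro h
      rw [h, norm_zero] at h1
      norm_num at h1
    have := weylV_rayleigh hA₂ hl₂ hu hu0
    rwa [h1, one_pow, mul_one] at this
  haveI hfin₁ : FiniteDimensional ℂ (weylV A₁ l₁) := weyl_adm_finite hA₁c hl₁ hadm₁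
  haveI hfin₂ : FiniteDimensional ℂ (weylV A₂ l₂) := weyl_adm_finite hA₂c hl₂ hadm₂
  set W := weylV A₁ l₁ ⊔ weylV A₂ l₂ with hW
  haveI hfinW : FiniteDimensional ℂ W := Submodule.finiteDimensional_sup _ _
  haveI : CompleteSpace W := FiniteDimensional.complete ℂ W
  rw [nEig]
  refine ciSup_le' fun F => ?_
  -- the projection onto W is injective on F
  have hinj0 : ∀ z : F.1, (W.orthogonalProjectionOnto (z : H)) = 0 → z = 0 := by
    intro z hz
    have hzW : (z : H) ∈ Wᗮ := by
      have h1 : (z : H) - (W.orthogonalProjectionOnto (z : H) : H) ∈ Wᗮ :=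
        Submodule.sub_starProjection_mem_orthogonal (K := W) (z : H)
      rw [hz] at h1
      simpa using h1
    by_contra hz0
    have hz0' : (z : H) ≠ 0 := fun h => hz0 (Subtype.ext h)
    have hn : (0:ℝ) < ‖(z : H)‖ := norm_pos_iff.mpr hz0'
    set y : H := ((‖(z:H)‖⁻¹ : ℝ) : ℂ) • (z : H) with hy
    have hy1 : ‖y‖ = 1 := by
      rw [hy, norm_smul, Complex.norm_real, norm_inv, norm_norm, inv_mul_cancel₀ hn.ne']
    have hyF : y ∈ F.1 := F.1.smul_mem _ z.2
    have hyW : y ∈ Wᗮ := Submodule.smul_mem _ _ hzW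
    have hy1' : y ∈ (weylV A₁ l₁)ᗮ := Submodule.orthogonal_le le_sup_left hyW
    have hy2' : y ∈ (weylV A₂ l₂)ᗮ := Submodule.orthogonal_le le_sup_right hyW
    have b1 := weyl_orth_bound hA₁c hA₁ hl₁ hy1' hy1
    have b2 := weyl_orth_bound hA₂c hA₂ hl₂ hy2' hy1
    have hsum := F.2 y hyF hy1
    rw [ContinuousLinearMap.add_apply, inner_add_left, Complex.add_re] at hsum
    linarith
  let f : F.1 →ₗ[ℂ] W := (W.orthogonalProjectionOnto).toLinearMap.comp F.1.subtype
  have hfinj : Function.Injective f := by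
    have := injective_iff_map_eq_zero f
    exact this.mpr hinj0
  calc Module.rank ℂ F.1 ≤ Module.rank ℂ W := LinearMap.rank_le_of_injective f hfinj
    _ ≤ Module.rank ℂ (weylV A₁ l₁) + Module.rank ℂ (weylV A₂ l₂) :=
        Submodule.rank_add_le_rank_add_rank _ _
    _ ≤ nEig l₁ A₁ + nEig l₂ A₂ := by
        refine add_le_add ?_ ?_
        · exact le_ciSup (f := fun (G : {F : Submodule ℂ H // ∀ u ∈ F, ‖u‖ = 1 →
            l₁ < (⟪A₁ u, u⟫_ℂ).re}) => Module.rank ℂ G.1)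
            (Cardinal.bddAbove_range _) ⟨weylV A₁ l₁, hadm₁⟩
        · exact le_ciSup (f := fun (G : {F : Submodule ℂ H // ∀ u ∈ F, ‖u‖ = 1 →
            l₂ < (⟪A₂ u, u⟫_ℂ).re}) => Module.rank ℂ G.1)
            (Cardinal.bddAbove_range _) ⟨weylV A₂ l₂, hadm₂⟩
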